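/- Suppose a nonnegative sequence (v_t)_{t≥1} satisfies v_1 ≤ 2 and, for all t ≥ 1, v_{t+1} ≤ (1 - η_t/3)v_t + η_t²/2 with η_t = C/(3(t+t_0)), where C ≥ 18 and C/6 - 1 ≤ t_0 ≤ C/2 - 1. Then v_t ≤ C/(t+t_0) for all t ≥ 1. -/

import Mathlib

theorem stmt14 (C t0 : ℝ) (hC : 18 ≤ C)
    (ht0l : C / 6 - 1 ≤ t0) (ht0u : t0 ≤ C / 2 - 1)
    (v : ℕ → ℝ) (hnn : ∀ t, 1 ≤ t → 0 ≤ v t) (hv1 : v 1 ≤ 2)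
    (η : ℕ → ℝ) (hη : ∀ t, η t = C / (3 * ((t : ℝ) + t0)))
    (hrec : ∀ t, 1 ≤ t → v (t + 1) ≤ (1 - η t / 3) * v t + (η t) ^ 2 / 2) :
    ∀ t, 1 ≤ t → v t ≤ C / ((t : ℝ) + t0) := by
  intro t ht
  induction t, ht using Nat.le_induction with
  | base =>
    have hpos : (0:ℝ) < 1 + t0 := by linarith
    push_cast
    rw [le_div_iff₀ hpos]
    nlinarith
  | succ t ht ih =>
    have hts : (1:ℝ) ≤ (t:ℝ) := by exact_mod_cast ht
    set s : ℝ := (t:ℝ) + t0 with hs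
    have hspos : 0 < s := by
      have : C / 6 ≤ s := by simp only [hs]; linarith
      linarith
    have hsC : C / 6 ≤ s := by simp only [hs]; linarith
    have hvle : v t ≤ C / s := ih
    have hcoef : 0 ≤ 1 - η t / 3 := by
      rw [hη t]
      rw [sub_nonneg, div_div]
      rw [div_le_one (by positivity)]
      nlinarith
    have hrec' := hrec t ht
    rw [hη t] at hrec'
    have step : v (t + 1) ≤ (1 - C / (3 * s) / 3) * (C / s) + (C / (3 * s)) ^ 2 / 2 := by
      refine le_trans hrec' ?_
      have := mul_le_mul_of_nonneg_left hvle hcoef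
      rw [hη t] at this
      exact add_le_add this le_rfl
    have e1 : (1 - C / (3 * s) / 3) * (C / s) + (C / (3 * s)) ^ 2 / 2
        = C / s - C ^ 2 / (18 * s ^ 2) := by
      field_simp
      ring
    have e2 : C / s - C ^ 2 / (18 * s ^ 2) ≤ C / (s + 1) := by
      rw [div_sub_div _ _ (ne_of_gt hspos) (by positivity : (18 * s ^ 2) ≠ 0),
        div_le_div_iff₀ (by positivity) (by linarith)]
      nlinarith [mul_nonneg (mul_nonneg (sub_nonneg.mpr hC) (by linarith : (0:ℝ) ≤ C)) (sq_nonneg s),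
        mul_nonneg (mul_nonneg (by linarith : (0:ℝ) ≤ C) (by linarith : (0:ℝ) ≤ C)) hspos.le]
    have : ((t:ℕ) + 1 : ℕ) = (t + 1 : ℕ) := rfl
    push_cast
    calc v (t + 1) ≤ C / s - C ^ 2 / (18 * s ^ 2) := by rw [← e1]; exact step
      _ ≤ C / (s + 1) := e2
      _ = C / ((t:ℝ) + 1 + t0) := by rw [hs]; ring_nf
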